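/- Suppose n ≥ 2 and B : I → 2^Q is injective. Then |T(n, k, B)| ≤ 3 · n!. -/

import Mathlib

/-!
Common definitions. `Q` is a finite set, `I = {1,…,k}` and `B : I → 2^Q`
(modelled as `B : ℕ → Set Q` used on indices in `{1,…,k}`). For a finite
sequence `α` over `I` (a `List ℕ`): `U(α) = ∪_{i} B(α[i])`,
`Cover(α) = { j ∈ I : B(j) ⊆ U(α) }`, and `Mini(α)` is the set of minimal
(and least-index among ties) extensions. A Mini-increasing sequence is a
nonempty `α` with `α[i] ∈ Mini(α[1..i−1])` for all positions `i`; these are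
exactly the non-root nodes of the increasing tree of sets `T(n,k,B)`.
-/

section
variable {Q : Type}

/-- `U(α) = ∪_{i=1}^{|α|} B(α[i])`. -/
def UB (B : ℕ → Set Q) (α : List ℕ) : Set Q := {q | ∃ j ∈ α, q ∈ B j}

/-- `Cover(α) = { j ∈ I : B(j) ⊆ U(α) }` where `I = {1,…,k}`. -/
def Cover (B : ℕ → Set Q) (k : ℕ) (α : List ℕ) : Set ℕ :=
  {j | 1 ≤ j ∧ j ≤ k ∧ B j ⊆ UB B α}

/-- `Mini(α)`: the `j ∈ I \ Cover(α)` minimally (and with least index among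
ties) extending `U(α)`. -/
def Mini (B : ℕ → Set Q) (k : ℕ) (α : List ℕ) : Set ℕ :=
  {j | (1 ≤ j ∧ j ≤ k ∧ j ∉ Cover B k α) ∧
    ∀ j', 1 ≤ j' → j' ≤ k → j' ∉ Cover B k α →
      (j' ≠ j → ¬ (B j' ∪ UB B α ⊂ B j ∪ UB B α)) ∧
      (j' < j → B j' ∪ UB B α ≠ B j ∪ UB B α)}

/-- A Mini-increasing sequence: nonempty, and each entry belongs to `Mini` of
the preceding prefix (0-indexed). -/
def MiniIncreasing (B : ℕ → Set Q) (k : ℕ) (α : List ℕ) : Prop :=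
  α ≠ [] ∧ ∀ i j, α[i]? = some j → j ∈ Mini B k (α.take i)

end


section LYMNat

variable {Q : Type} [DecidableEq Q]


open Finset

variable {Q : Type} [DecidableEq Q]

/-- permutations of a finset as a finset of lists -/
noncomputable def permsOf (X : Finset Q) : Finset (List Q) := X.toList.permutations.toFinset

lemma mem_permsOf {X : Finset Q} {l : List Q} : l ∈ permsOf X ↔ l.Perm X.toList := by
  simp [permsOf, List.mem_permutations]

lemma card_permsOf (X : Finset Q) : (permsOf X).card = X.card.factorial := by
  rw [permsOf, List.toFinset_card_of_nodup (List.nodup_permutations _ X.nodup_toList),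
    List.length_permutations, Finset.length_toList]

lemma permsOf_toFinset {X : Finset Q} {l : List Q} (h : l ∈ permsOf X) : l.toFinset = X := by
  rw [mem_permsOf] at h
  rw [List.toFinset_eq_of_perm _ _ h, Finset.toList_toFinset]

lemma permsOf_length {X : Finset Q} {l : List Q} (h : l ∈ permsOf X) : l.length = X.card := by
  rw [mem_permsOf] at h
  rw [h.length_eq, Finset.length_toList]

lemma perms_prefix_subset {C C' : Finset Q} {l1 l2 l1' l2' : List Q}
    (h1 : l1 ∈ permsOf C) (h1' : l1' ∈ permsOf C')
    (heq : l1 ++ l2 = l1' ++ l2') (hle : C.card ≤ C'.card) : C ⊆ C' := by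
  have hlen : l1.length ≤ l1'.length := by
    rw [permsOf_length h1, permsOf_length h1']; exact hle
  have hpre : l1 = l1'.take l1.length := by
    have h : List.take l1.length (l1 ++ l2) = l1 := List.take_left
    rw [heq, List.take_append_of_le_length hlen] at h
    exact h.symm
  intro x hx
  rw [← permsOf_toFinset h1', List.mem_toFinset]
  rw [← permsOf_toFinset h1, List.mem_toFinset] at hx
  exact (hpre ▸ hx |> (List.take_sublist _ _).subset)

lemma lym_nat (M : Finset Q) (A : Finset (Finset Q))
    (hsub : ∀ C ∈ A, C ⊆ M)
    (hanti : ∀ C ∈ A, ∀ C' ∈ A, C ⊆ C' → C = C') :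
    ∑ C ∈ A, (C.card.factorial * (M.card - C.card).factorial) ≤ M.card.factorial := by
  classical
  set S : Finset ((_ : Finset Q) × (List Q × List Q)) :=
    A.sigma (fun C => (permsOf C) ×ˢ (permsOf (M \ C))) with hS
  have hcardS : S.card = ∑ C ∈ A, (C.card.factorial * (M.card - C.card).factorial) := by
    rw [hS, Finset.card_sigma]
    refine Finset.sum_congr rfl fun C hC => ?_
    rw [Finset.card_product, card_permsOf, card_permsOf, Finset.card_sdiff_of_subset (hsub C hC)]
  rw [← hcardS, ← card_permsOf M]
  apply Finset.card_le_card_of_injOn (fun p => p.2.1 ++ p.2.2)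
  · rintro ⟨C, l1, l2⟩ hp
    simp only [hS, Finset.mem_coe, Finset.mem_sigma, Finset.mem_product] at hp ⊢
    obtain ⟨hC, h1, h2⟩ := hp
    rw [mem_permsOf] at h1 h2 ⊢
    refine (h1.append h2).trans ?_
    rw [← Multiset.coe_eq_coe]
    have : ((C.toList ++ (M \ C).toList : List Q) : Multiset Q) = C.val + (M \ C).val := by
      rw [← Multiset.coe_add]
      congr 1 <;> [exact Multiset.coe_toList _; exact Multiset.coe_toList _]
    rw [this, Finset.sdiff_val, add_tsub_cancel_of_le (Finset.val_le_iff.mpr (hsub C hC))]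
    exact (Multiset.coe_toList M.val).symm
  · rintro ⟨C, l1, l2⟩ hp ⟨C', l1', l2'⟩ hp' heq
    simp only [hS, Finset.mem_coe, Finset.mem_sigma, Finset.mem_product] at hp hp'
    obtain ⟨hC, h1, h2⟩ := hp
    obtain ⟨hC', h1', h2'⟩ := hp'
    simp only at heq
    have hCC : C = C' := by
      rcases le_total C.card C'.card with h | h
      · exact hanti C hC C' hC' (perms_prefix_subset h1 h1' heq h)
      · exact (hanti C' hC' C hC (perms_prefix_subset h1' h1 heq.symm h)).symm
    subst hCC
    have hlen : l1.length = l1'.length := by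
      rw [permsOf_length h1, permsOf_length h1']
    obtain ⟨rfl, rfl⟩ := List.append_inj heq hlen
    rfl

end LYMNat

open Finset in

/-- Bound for subtree node counts, in terms of the complement size. -/
def Bd : ℕ → ℕ := fun m => if m = 0 then 1 else 3 * m.factorial - 1

lemma Bd_pos (m : ℕ) : 1 ≤ Bd m := by
  unfold Bd; split
  · exact le_refl 1
  · have := Nat.factorial_pos m; omega

lemma Bd_add_one_le (m : ℕ) : Bd m + 1 ≤ 3 * m.factorial := by
  unfold Bd; split
  · simp_all [Nat.factorial]
  · have := Nat.factorial_pos m; omega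

lemma bd_key {Q : Type} [DecidableEq Q] (M : Finset Q) (A : Finset (Finset Q))
    (hA : A.Nonempty) (hsub : ∀ C ∈ A, C ⊆ M) (hne : ∀ C ∈ A, C.Nonempty)
    (hanti : ∀ C ∈ A, ∀ C' ∈ A, C ⊆ C' → C = C') :
    1 + ∑ C ∈ A, Bd (M.card - C.card) ≤ Bd M.card := by
  obtain ⟨C₀, hC₀⟩ := hA
  set m := M.card with hm
  have hm1 : 1 ≤ m := by
    rw [hm]
    exact (Finset.card_pos.mpr ((hne C₀ hC₀).mono (hsub C₀ hC₀)))
  rcases eq_or_lt_of_le hm1 with hm1' | hm2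
  · -- m = 1 : every C ∈ A equals M, so A = {M}
    have hAM : ∀ C ∈ A, C = M := by
      intro C hC
      apply Finset.eq_of_subset_of_card_le (hsub C hC)
      have := Finset.card_pos.mpr (hne C hC)
      omega
    have hA_eq : A = {M} := by
      apply Finset.eq_singleton_iff_unique_mem.mpr
      exact ⟨hAM C₀ hC₀ ▸ hC₀, hAM⟩
    subst hA_eq
    simp only [Finset.sum_singleton, Nat.sub_self]
    rw [← hm1']
    simp [Bd, show M.card = 1 by omega]
  -- now 2 ≤ m
  -- split A into singletons and bigger sets
  classical
  set A1 := A.filter (fun C => C.card = 1) with hA1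
  set A2 := A.filter (fun C => ¬ C.card = 1) with hA2
  set r := A1.card with hr
  set s := A2.card with hs
  set F := (m - 1).factorial with hF
  set Z := m.factorial with hZ
  set Sb := ∑ C ∈ A, Bd (m - C.card) with hSb
  set t := ∑ C ∈ A2, (m - C.card).factorial with ht
  have hFpos : 1 ≤ F := Nat.factorial_pos _
  have hmZ : m * F = Z := by
    rw [hF, hZ]; exact Nat.mul_factorial_pred (by omega)
  have hcard2 : ∀ C ∈ A2, 2 ≤ C.card := by
    intro C hC
    rw [hA2, Finset.mem_filter] at hC
    have := Finset.card_pos.mpr (hne C hC.1)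
    omega
  have hrs : r + s = A.card := by
    rw [hr, hs, hA1, hA2]
    exact Finset.card_filter_add_card_filter_not _
  have hrm : r ≤ m := by
    have : A1 ⊆ M.powersetCard 1 := by
      intro C hC
      rw [hA1, Finset.mem_filter] at hC
      rw [Finset.mem_powersetCard]
      exact ⟨hsub C hC.1, hC.2⟩
    have := Finset.card_le_card this
    rwa [Finset.card_powersetCard, Nat.choose_one_right] at this
  -- sum splitting
  have hsplit : ∑ C ∈ A, (m - C.card).factorial = r * F + t := by
    rw [← Finset.sum_filter_add_sum_filter_not A (fun C => C.card = 1)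
      (fun C => (m - C.card).factorial), ← hA1, ← hA2, ← ht]
    congr 1
    rw [Finset.sum_congr rfl (fun C hC => ?_), Finset.sum_const, smul_eq_mul, ← hr]
    rw [hA1, Finset.mem_filter] at hC
    rw [hC.2, hF]
  -- LYM consequence
  have hlym : r * F + 2 * t ≤ Z := by
    have h := lym_nat M A hsub hanti
    rw [← hm, ← hZ] at h
    refine le_trans ?_ h
    rw [← Finset.sum_filter_add_sum_filter_not A (fun C => C.card = 1)
      (fun C => C.card.factorial * (m - C.card).factorial), ← hA1, ← hA2]
    have e1 : ∑ C ∈ A1, C.card.factorial * (m - C.card).factorial = r * F := by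
      rw [Finset.sum_congr rfl (fun C hC => ?_), Finset.sum_const, smul_eq_mul, ← hr]
      rw [hA1, Finset.mem_filter] at hC
      rw [hC.2, hF]; simp [Nat.factorial]
    have e2 : 2 * t ≤ ∑ C ∈ A2, C.card.factorial * (m - C.card).factorial := by
      rw [ht, Finset.mul_sum]
      refine Finset.sum_le_sum fun C hC => ?_
      have h2 : 2 ≤ C.card.factorial := by
        calc 2 = Nat.factorial 2 := rfl
        _ ≤ _ := Nat.factorial_le (hcard2 C hC)
      exact Nat.mul_le_mul_right _ h2
    omega
  -- bound on Sb
  have hsum : Sb + (r + s) ≤ 3 * (r * F) + 3 * t := by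
    have h1 : Sb + A.card = ∑ C ∈ A, (Bd (m - C.card) + 1) := by
      rw [Finset.sum_add_distrib, Finset.sum_const, smul_eq_mul, mul_one]
    have h2 : ∑ C ∈ A, (Bd (m - C.card) + 1) ≤ ∑ C ∈ A, 3 * (m - C.card).factorial :=
      Finset.sum_le_sum fun C _ => Bd_add_one_le _
    rw [hrs, h1]
    calc ∑ C ∈ A, (Bd (m - C.card) + 1) ≤ ∑ C ∈ A, 3 * (m - C.card).factorial := h2
      _ = 3 * (r * F + t) := by rw [← Finset.mul_sum, hsplit]
      _ = 3 * (r * F) + 3 * t := by ring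
  -- final goal
  have hBdm : Bd m = 3 * Z - 1 := by
    unfold Bd; rw [if_neg (by omega), hZ]
  rw [hBdm]
  have hZpos : 1 ≤ Z := Nat.factorial_pos _
  -- suffices Sb + 2 ≤ 3 * Z
  rcases Nat.eq_zero_or_pos s with hs0 | hs1
  · -- no big sets : t = 0, r = A.card ≥ 1
    have ht0 : t = 0 := by
      have hA2e : A2 = ∅ := Finset.card_eq_zero.mp (by omega)
      rw [ht, hA2e, Finset.sum_empty]
    have hr1 : 1 ≤ r := by
      have : 1 ≤ A.card := Finset.card_pos.mpr ⟨C₀, hC₀⟩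
      omega
    rcases eq_or_lt_of_le hrm with hrm' | hrm'
    · -- r = m : X = Z
      have hXZ : r * F = Z := by rw [hrm']; exact hmZ
      omega
    · -- r + 1 ≤ m
      have hX3 : r * F + F ≤ Z := by
        calc r * F + F = (r + 1) * F := by ring
        _ ≤ m * F := Nat.mul_le_mul_right _ (by omega)
        _ = Z := hmZ
      omega
  · -- some big set exists
    obtain ⟨C₁, hC₁⟩ : A2.Nonempty := Finset.card_pos.mp hs1
    have hc1 : 2 ≤ C₁.card := hcard2 C₁ hC₁
    have hC₁A : C₁ ∈ A := (Finset.mem_filter.mp hC₁).1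
    -- singletons avoid C₁
    have hrm2 : r + 2 ≤ m := by
      have hsub1 : A1 ⊆ (M \ C₁).powersetCard 1 := by
        intro C hC
        rw [hA1, Finset.mem_filter] at hC
        rw [Finset.mem_powersetCard]
        refine ⟨?_, hC.2⟩
        obtain ⟨x, hx⟩ := Finset.card_eq_one.mp hC.2
        rw [hx, Finset.singleton_subset_iff, Finset.mem_sdiff]
        constructor
        · exact hsub _ hC.1 (hx ▸ Finset.mem_singleton_self x)
        · intro hxC₁
          have h5 : C = C₁ := hanti _ hC.1 _ hC₁A
            (by rw [hx]; exact Finset.singleton_subset_iff.mpr hxC₁)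
          have h6 := hC.2
          rw [h5] at h6
          omega
      have h1 := Finset.card_le_card hsub1
      rw [Finset.card_powersetCard, Nat.choose_one_right,
        Finset.card_sdiff_of_subset (hsub C₁ hC₁A)] at h1
      omega
    have hX2 : r * F + 2 * F ≤ Z := by
      calc r * F + 2 * F = (r + 2) * F := by ring
      _ ≤ m * F := Nat.mul_le_mul_right _ hrm2
      _ = Z := hmZ
    omega

section TreeMachinery

variable {Q : Type}

/-- the set of valid continuations after a prefix `α` (including the empty one) -/
def TSet (B : ℕ → Set Q) (k : ℕ) (α : List ℕ) : Set (List ℕ) :=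
  {β | ∀ i j, β[i]? = some j → j ∈ Mini B k (α ++ β.take i)}

lemma UB_append_singleton (B : ℕ → Set Q) (α : List ℕ) (j : ℕ) :
    UB B (α ++ [j]) = UB B α ∪ B j := by
  ext q
  simp only [UB, Set.mem_setOf_eq, List.mem_append, List.mem_singleton, Set.mem_union]
  constructor
  · rintro ⟨j', h | rfl, hq⟩
    · exact Or.inl ⟨j', h, hq⟩
    · exact Or.inr hq
  · rintro (⟨j', h, hq⟩ | hq)
    · exact ⟨j', Or.inl h, hq⟩
    · exact ⟨j, Or.inr rfl, hq⟩

lemma Mini_not_subset {B : ℕ → Set Q} {k : ℕ} {α : List ℕ} {j : ℕ}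
    (hj : j ∈ Mini B k α) : ¬ B j ⊆ UB B α := by
  obtain ⟨⟨h1, h2, h3⟩, _⟩ := hj
  exact fun hsub => h3 ⟨h1, h2, hsub⟩

lemma Mini_union_ne {B : ℕ → Set Q} {k : ℕ} {α : List ℕ} {j j' : ℕ}
    (hj : j ∈ Mini B k α) (hj' : j' ∈ Mini B k α) (hne : j ≠ j') :
    B j ∪ UB B α ≠ B j' ∪ UB B α := by
  rcases lt_or_gt_of_ne hne with h | h
  · exact ((hj'.2 j hj.1.1 hj.1.2.1 hj.1.2.2).2 h)
  · exact fun he => ((hj.2 j' hj'.1.1 hj'.1.2.1 hj'.1.2.2).2 h) he.symm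

lemma Mini_not_ssubset {B : ℕ → Set Q} {k : ℕ} {α : List ℕ} {j j' : ℕ}
    (hj : j ∈ Mini B k α) (hj' : j' ∈ Mini B k α) (hne : j' ≠ j) :
    ¬ (B j' ∪ UB B α ⊂ B j ∪ UB B α) :=
  (hj.2 j' hj'.1.1 hj'.1.2.1 hj'.1.2.2).1 hne

lemma TSet_decomp (B : ℕ → Set Q) (k : ℕ) (α : List ℕ) :
    TSet B k α = {([] : List ℕ)} ∪ ⋃ j ∈ Mini B k α, (List.cons j) '' TSet B k (α ++ [j]) := by
  ext β
  constructor
  · intro hβ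
    match β with
    | [] => exact Or.inl rfl
    | j :: γ =>
      right
      have hj : j ∈ Mini B k α := by
        have h := hβ 0 j (by simp)
        simpa using h
      refine Set.mem_biUnion hj ⟨γ, ?_, rfl⟩
      intro i j' h
      have h2 := hβ (i + 1) j' (by simpa using h)
      rw [List.take_succ_cons] at h2
      have e : α ++ j :: List.take i γ = (α ++ [j]) ++ List.take i γ := by simp
      rwa [e] at h2
  · intro hβ
    rcases hβ with h | h
    · rw [Set.mem_singleton_iff] at h
      subst h
      intro i j h'
      simp at h'
    · rw [Set.mem_iUnion₂] at h
      obtain ⟨j, hj, γ, hγ, rfl⟩ := h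
      intro i j' h'
      match i with
      | 0 =>
        simp only [List.getElem?_cons_zero, Option.some.injEq] at h'
        subst h'
        simpa using hj
      | i + 1 =>
        rw [List.getElem?_cons_succ] at h'
        have h2 := hγ i j' h'
        rw [List.take_succ_cons]
        have e : α ++ j :: List.take i γ = (α ++ [j]) ++ List.take i γ := by simp
        rwa [← e] at h2


end TreeMachinery

lemma ncard_biUnion_le {ι α : Type*} [DecidableEq ι] (s : Finset ι) (f : ι → Set α) :
    (⋃ i ∈ s, f i).ncard ≤ ∑ i ∈ s, (f i).ncard := by
  induction s using Finset.induction_on with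
  | empty => simp
  | @insert a s ha ih =>
    rw [Finset.set_biUnion_insert, Finset.sum_insert ha]
    exact le_trans (Set.ncard_union_le _ _) (Nat.add_le_add_left ih _)

section
variable {Q : Type} [Fintype Q]

lemma TSet_of_mini_empty {B : ℕ → Set Q} {k : ℕ} {α : List ℕ}
    (h : Mini B k α = ∅) : TSet B k α = {([] : List ℕ)} := by
  rw [TSet_decomp B k α, h]
  simp

lemma ncard_compl_lt {B : ℕ → Set Q} {k : ℕ} {α : List ℕ} {j : ℕ}
    (hj : j ∈ Mini B k α) :
    (UB B α).ncard < (UB B (α ++ [j])).ncard := by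
  rw [UB_append_singleton]
  apply Set.ncard_lt_ncard _ (Set.toFinite _)
  constructor
  · exact Set.subset_union_left
  · intro hsub
    exact Mini_not_subset hj fun q hq => hsub (Set.mem_union_right _ hq)

lemma UB_ncard_le (B : ℕ → Set Q) (α : List ℕ) :
    (UB B α).ncard ≤ Fintype.card Q := by
  have := Set.ncard_le_ncard (Set.subset_univ (UB B α)) Set.finite_univ
  rwa [Set.ncard_univ, Nat.card_eq_fintype_card] at this

lemma TSet_bound (B : ℕ → Set Q) (k : ℕ) :
    ∀ d (α : List ℕ), Fintype.card Q - (UB B α).ncard ≤ d →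
      (TSet B k α).Finite ∧
        (TSet B k α).ncard ≤ Bd (Fintype.card Q - (UB B α).ncard) := by
  classical
  intro d
  induction d with
  | zero =>
    intro α hα
    have hM : Mini B k α = ∅ := by
      by_contra h
      obtain ⟨j, hj⟩ := Set.nonempty_iff_ne_empty.mpr h
      have h1 := ncard_compl_lt (B := B) (k := k) hj
      have h2 := UB_ncard_le B (α ++ [j])
      omega
    rw [TSet_of_mini_empty hM]
    exact ⟨Set.finite_singleton _, by rw [Set.ncard_singleton]; exact Bd_pos _⟩
  | succ d ih =>
    intro α hα
    rcases Set.eq_empty_or_nonempty (Mini B k α) with hM | hM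
    · rw [TSet_of_mini_empty hM]
      exact ⟨Set.finite_singleton _, by rw [Set.ncard_singleton]; exact Bd_pos _⟩
    -- notation
    set Mfin : Finset ℕ := (Finset.Icc 1 k).filter (· ∈ Mini B k α) with hMfin
    have hMfin_mem : ∀ j, j ∈ Mfin ↔ j ∈ Mini B k α := by
      intro j
      rw [hMfin, Finset.mem_filter, Finset.mem_Icc]
      exact ⟨fun h => h.2, fun h => ⟨⟨h.1.1, h.1.2.1⟩, h⟩⟩
    have hMini_coe : Mini B k α = ↑Mfin := by
      ext j; rw [Finset.mem_coe, hMfin_mem]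
    -- child facts
    have hchild : ∀ j ∈ Mfin, Fintype.card Q - (UB B (α ++ [j])).ncard ≤ d := by
      intro j hj
      have h1 := ncard_compl_lt (B := B) (k := k) ((hMfin_mem j).mp hj)
      have h2 := UB_ncard_le B (α ++ [j])
      omega
    have hIH : ∀ j ∈ Mfin, (TSet B k (α ++ [j])).Finite ∧
        (TSet B k (α ++ [j])).ncard ≤ Bd (Fintype.card Q - (UB B (α ++ [j])).ncard) :=
      fun j hj => ih _ (hchild j hj)
    -- decomposition
    have hdec : TSet B k α =
        {([] : List ℕ)} ∪ ⋃ j ∈ Mfin, (List.cons j) '' TSet B k (α ++ [j]) := by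
      rw [TSet_decomp B k α, hMini_coe, Finset.set_biUnion_coe]
    have hfin : (TSet B k α).Finite := by
      rw [hdec]
      exact (Set.finite_singleton _).union
        (Set.Finite.biUnion Mfin.finite_toSet fun j hj => ((hIH j hj).1).image _)
    refine ⟨hfin, ?_⟩
    -- counting
    have hcount : (TSet B k α).ncard ≤ 1 + ∑ j ∈ Mfin, Bd (Fintype.card Q - (UB B (α ++ [j])).ncard) := by
      rw [hdec]
      refine le_trans (Set.ncard_union_le _ _) ?_
      rw [Set.ncard_singleton]
      refine Nat.add_le_add_left (le_trans (ncard_biUnion_le Mfin _) ?_) 1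
      refine Finset.sum_le_sum fun j hj => ?_
      rw [Set.ncard_image_of_injective _ (List.cons_injective)]
      exact (hIH j hj).2
    -- set up the antichain of blocks
    set M : Finset Q := (Set.toFinite (UB B α)ᶜ).toFinset with hMdef
    have hMcard : M.card = Fintype.card Q - (UB B α).ncard := by
      rw [hMdef, ← Set.ncard_eq_toFinset_card _ (Set.toFinite _)]
      have := Set.ncard_add_ncard_compl (UB B α)
      rw [Nat.card_eq_fintype_card] at this
      omega
    set Dfin : ℕ → Finset Q := fun j => (Set.toFinite (B j \ UB B α)).toFinset with hDdef
    have hDmem : ∀ j x, x ∈ Dfin j ↔ x ∈ B j \ UB B α := by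
      intro j x; rw [hDdef]; exact Set.Finite.mem_toFinset _
    have hDset : ∀ j, ↑(Dfin j) = B j \ UB B α := by
      intro j; rw [hDdef]; exact Set.Finite.coe_toFinset _
    have hunion : ∀ j, UB B α ∪ (B j \ UB B α) = B j ∪ UB B α := by
      intro j; rw [Set.union_diff_self, Set.union_comm]
    -- injectivity of blocks on Mfin
    have hinj : ∀ j ∈ Mfin, ∀ j' ∈ Mfin, Dfin j = Dfin j' → j = j' := by
      intro j hj j' hj' he
      by_contra hne
      apply Mini_union_ne ((hMfin_mem j).mp hj) ((hMfin_mem j').mp hj') hne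
      rw [← hunion, ← hunion, ← hDset, ← hDset, he]
    set A : Finset (Finset Q) := Mfin.image Dfin with hAdef
    -- cardinalities of blocks
    have hDcard : ∀ j ∈ Mfin, Fintype.card Q - (UB B (α ++ [j])).ncard = M.card - (Dfin j).card := by
      intro j hj
      rw [hMcard]
      have h1 : (UB B (α ++ [j])).ncard = (UB B α).ncard + (B j \ UB B α).ncard := by
        rw [UB_append_singleton, Set.union_comm (UB B α) (B j), ← hunion j, Set.ncard_union_eq
          Set.disjoint_sdiff_right (Set.toFinite _) (Set.toFinite _)]
      have h2 : (Dfin j).card = (B j \ UB B α).ncard := by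
        rw [hDdef, Set.ncard_eq_toFinset_card _ (Set.toFinite _)]
      have h3 := UB_ncard_le B (α ++ [j])
      omega
    -- apply the key bound
    have hkey : 1 + ∑ C ∈ A, Bd (M.card - C.card) ≤ Bd M.card := by
      apply bd_key
      · obtain ⟨j, hj⟩ := hM
        exact ⟨Dfin j, Finset.mem_image_of_mem _ ((hMfin_mem j).mpr hj)⟩
      · intro C hC
        rw [hAdef, Finset.mem_image] at hC
        obtain ⟨j, hj, rfl⟩ := hC
        intro x hx
        rw [hDmem] at hx
        rw [hMdef, Set.Finite.mem_toFinset]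
        exact hx.2
      · intro C hC
        rw [hAdef, Finset.mem_image] at hC
        obtain ⟨j, hj, rfl⟩ := hC
        obtain ⟨q, hq1, hq2⟩ := Set.not_subset.mp (Mini_not_subset ((hMfin_mem j).mp hj))
        exact ⟨q, (hDmem j q).mpr ⟨hq1, hq2⟩⟩
      · intro C hC C' hC' hsub
        rw [hAdef, Finset.mem_image] at hC hC'
        obtain ⟨j, hj, rfl⟩ := hC
        obtain ⟨j', hj', rfl⟩ := hC'
        by_cases hjj : j = j'
        · rw [hjj]
        · exfalso
          have hsub' : B j ∪ UB B α ⊆ B j' ∪ UB B α := by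
            rw [← hunion, ← hunion, ← hDset, ← hDset]
            exact Set.union_subset_union_right _ (by exact_mod_cast hsub)
          rcases (Set.eq_or_ssubset_of_subset hsub').symm with h | h
          · exact Mini_not_ssubset ((hMfin_mem j').mp hj') ((hMfin_mem j).mp hj) hjj h
          · exact Mini_union_ne ((hMfin_mem j).mp hj) ((hMfin_mem j').mp hj') hjj h
    -- reindex the sum
    have hsum : ∑ j ∈ Mfin, Bd (Fintype.card Q - (UB B (α ++ [j])).ncard)
        = ∑ C ∈ A, Bd (M.card - C.card) := by
      rw [hAdef, Finset.sum_image hinj]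
      exact Finset.sum_congr rfl fun j hj => by rw [hDcard j hj]
    calc (TSet B k α).ncard ≤ 1 + ∑ j ∈ Mfin, Bd (Fintype.card Q - (UB B (α ++ [j])).ncard) := hcount
      _ = 1 + ∑ C ∈ A, Bd (M.card - C.card) := by rw [hsum]
      _ ≤ Bd M.card := hkey
      _ = Bd (Fintype.card Q - (UB B α).ncard) := by rw [hMcard]

/-!
STATEMENT 14: Suppose n ≥ 2 and B : I → 2^Q is injective. Then
|T(n, k, B)| ≤ 3 · n!.
-/

theorem miniIncreasing_count_injective
    {Q : Type} [Fintype Q] (n k : ℕ) (hn : 2 ≤ n) (hk : 1 ≤ k)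
    (hcard : Fintype.card Q = n) (B : ℕ → Set Q)
    (hinjB : Set.InjOn B (Set.Icc 1 k)) :
    {α : List ℕ | MiniIncreasing B k α}.ncard ≤ 3 * n.factorial := by
  classical
  have hUB : UB B ([] : List ℕ) = ∅ := by
    ext q; simp [UB]
  have h0 : (UB B ([] : List ℕ)).ncard = 0 := by rw [hUB]; exact Set.ncard_empty _
  have hsub : {α : List ℕ | MiniIncreasing B k α} ⊆ TSet B k [] := by
    intro α hα i j h
    have h2 := hα.2 i j h
    simpa using h2
  have hb := TSet_bound B k (Fintype.card Q - (UB B ([] : List ℕ)).ncard) [] le_rfl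
  have hle := Set.ncard_le_ncard hsub hb.1
  refine le_trans hle (le_trans hb.2 ?_)
  rw [h0, hcard, Nat.sub_zero]
  unfold Bd
  rw [if_neg (by omega)]
  have := Nat.factorial_pos n
  omega
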